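/- Let M be a matroid and ψ: E(M) → Γ a labeling to an abelian group. If there exists a basis B of M such that every basis B' with |B \ B'| ≤ 1 satisfies ψ(B') = ψ(B), then all bases of M have the same label ψ. -/

import Mathlib

open Set

/-- Symmetric basis exchange, proved via closures. -/
lemma symm_exchange_aux {α : Type*} {M : Matroid α} [M.Finite] {B₁ B₂ : Set α} {e : α}
    (hB₁ : M.IsBase B₁) (hB₂ : M.IsBase B₂) (he₁ : e ∈ B₁) (he₂ : e ∉ B₂) :
    ∃ f ∈ B₂ \ B₁, M.IsBase (insert f (B₁ \ {e})) ∧ M.IsBase (insert e (B₂ \ {f})) := by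
  have heE : e ∈ M.E := hB₁.subset_ground he₁
  have hB₂fin : B₂.Finite := (M.ground_finite).subset hB₂.subset_ground
  -- a minimal subset `J` of `B₂` whose closure contains `e`
  set S : Set (Set α) := {J | J ⊆ B₂ ∧ e ∈ M.closure J} with hS
  have hSfin : S.Finite := hB₂fin.finite_subsets.subset fun J hJ => hJ.1
  have hSne : S.Nonempty := ⟨B₂, rfl.subset, by rw [hB₂.closure_eq]; exact heE⟩
  obtain ⟨J, hJS, hJmin⟩ : ∃ J ∈ S, ∀ J' ∈ S, J' ⊆ J → J = J' := by
    obtain ⟨J, hJ⟩ := hSfin.exists_minimal hSne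
    exact ⟨J, hJ.prop, fun J' hJ' hle => hJ.eq_of_ge hJ' hle⟩
  have hJmin' : ∀ f ∈ J, e ∉ M.closure (J \ {f}) := by
    intro f hf hecl
    have : J = J \ {f} := hJmin (J \ {f}) ⟨diff_subset.trans hJS.1, hecl⟩ diff_subset
    exact (this ▸ hf).2 rfl
  -- find `f ∈ J` outside the closure of `B₁ \ {e}`
  have hnotall : ∃ f ∈ J, f ∉ M.closure (B₁ \ {e}) := by
    by_contra hcon
    push_neg at hcon
    have : e ∈ M.closure (B₁ \ {e}) := by
      have h1 : M.closure J ⊆ M.closure (M.closure (B₁ \ {e})) :=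
        M.closure_subset_closure hcon
      rw [M.closure_closure] at h1
      exact h1 hJS.2
    exact hB₁.indep.notMem_closure_sdiff_of_mem he₁ this
  obtain ⟨f, hfJ, hfcl⟩ := hnotall
  have hfB₂ : f ∈ B₂ := hJS.1 hfJ
  have hfE : f ∈ M.E := hB₂.subset_ground hfB₂
  have hfne : f ≠ e := fun h => he₂ (h ▸ hfB₂)
  have hfB₁ : f ∉ B₁ := by
    intro hf
    exact hfcl (M.subset_closure (B₁ \ {e})
      (diff_subset.trans hB₁.subset_ground) ⟨hf, hfne⟩)
  have hfnotmem : f ∉ B₁ \ {e} := fun h => hfB₁ h.1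
  -- first base
  have hbase1 : M.IsBase (insert f (B₁ \ {e})) := by
    refine hB₁.exchange_isBase_of_indep hfB₁ ?_
    exact ((hB₁.indep.diff {e}).insert_indep_iff_of_notMem hfnotmem).mpr ⟨hfE, hfcl⟩
  -- `e ∉ closure (B₂ \ {f})`
  have hecl2 : e ∉ M.closure (B₂ \ {f}) := by
    intro he2
    have hJf : e ∈ M.closure (insert f (J \ {f})) := by
      rw [insert_diff_singleton, insert_eq_of_mem hfJ]
      exact hJS.2
    have hx := Matroid.closure_exchange (M := M) (e := e) (f := f) (X := J \ {f})
      ⟨hJf, hJmin' f hfJ⟩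
    have hsub : M.closure (insert e (J \ {f})) ⊆ M.closure (insert e (B₂ \ {f})) :=
      M.closure_subset_closure (insert_subset_insert (diff_subset_diff_left hJS.1))
    rw [Matroid.closure_insert_eq_of_mem_closure he2] at hsub
    exact hB₂.indep.notMem_closure_sdiff_of_mem hfB₂ (hsub hx.1)
  have henotmem : e ∉ B₂ \ {f} := fun h => he₂ h.1
  have hbase2 : M.IsBase (insert e (B₂ \ {f})) := by
    refine hB₂.exchange_isBase_of_indep he₂ ?_
    exact ((hB₂.indep.diff {f}).insert_indep_iff_of_notMem henotmem).mpr ⟨heE, hecl2⟩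
  exact ⟨f, ⟨hfB₂, hfB₁⟩, hbase1, hbase2⟩

/-- If a matroid has a basis `B` such that every basis `B'` with
`|B \ B'| ≤ 1` satisfies `ψ(B') = ψ(B)`, then all bases have the same label. -/
theorem stmt_2 {α Γ : Type*} [AddCommGroup Γ] (M : Matroid α) [M.Finite]
    (ψ : α → Γ) (B : Set α) (hB : M.IsBase B)
    (h : ∀ B', M.IsBase B' → (B \ B').ncard ≤ 1 →
      (∑ᶠ e ∈ B', ψ e) = ∑ᶠ e ∈ B, ψ e) :
    ∀ B₁ B₂, M.IsBase B₁ → M.IsBase B₂ →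
      (∑ᶠ e ∈ B₁, ψ e) = ∑ᶠ e ∈ B₂, ψ e := by
  have hBfin : B.Finite := M.ground_finite.subset hB.subset_ground
  -- sum over a finite set with a distinguished element
  have hsum : ∀ (S : Set α) (a : α), S.Finite → a ∈ S →
      (∑ᶠ e ∈ S, ψ e) = ψ a + ∑ᶠ e ∈ S \ {a}, ψ e := by
    intro S a hSfin haS
    have h1 : (∑ᶠ e ∈ insert a (S \ {a}), ψ e) = ψ a + ∑ᶠ e ∈ S \ {a}, ψ e :=
      finsum_mem_insert ψ (fun hx => hx.2 rfl) (hSfin.diff)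
    rwa [insert_diff_singleton, insert_eq_of_mem haS] at h1
  -- main claim: every base has the same sum as B
  have main : ∀ n (B' : Set α), M.IsBase B' → (B \ B').ncard = n →
      (∑ᶠ e ∈ B', ψ e) = ∑ᶠ e ∈ B, ψ e := by
    intro n
    induction n using Nat.strong_induction_on with
    | _ n IH =>
      intro B' hB' hcard
      rcases le_or_gt n 1 with hn | hn
      · exact h B' hB' (hcard ▸ hn)
      · have hdiffne : (B \ B').Nonempty := by
          rw [← Set.ncard_pos ((hBfin.diff))]
          omega
        obtain ⟨e, heB, heB'⟩ := hdiffne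
        obtain ⟨f, ⟨hfB', hfB⟩, hb1, hb2⟩ := symm_exchange_aux hB hB' heB heB'
        have hB'fin : B'.Finite := M.ground_finite.subset hB'.subset_ground
        -- ψ f = ψ e from hypothesis `h` applied to `insert f (B \ {e})`
        have hcard1 : (B \ insert f (B \ {e})).ncard ≤ 1 := by
          have : B \ insert f (B \ {e}) ⊆ {e} := by
            intro x hx
            simp only [mem_diff, mem_insert_iff, not_or, mem_diff, mem_singleton_iff,
              not_and, not_not] at hx
            exact hx.2.2 hx.1
          exact le_trans (Set.ncard_le_ncard this (finite_singleton e)) (by simp)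
        have hψfe : ψ f = ψ e := by
          have h1 := h _ hb1 hcard1
          rw [finsum_mem_insert ψ (fun hx => hfB hx.1) (hBfin.diff)] at h1
          rw [hsum B e hBfin heB] at h1
          exact add_right_cancel h1
        -- the new base
        set B'' := insert e (B' \ {f}) with hB''
        have hcard2 : (B \ B'').ncard = n - 1 := by
          have hset : B \ B'' = (B \ B') \ {e} := by
            ext x
            simp only [hB'', mem_diff, mem_insert_iff, mem_singleton_iff, not_or]
            constructor
            · rintro ⟨hxB, hxe, hx2⟩
              refine ⟨⟨hxB, fun hxB' => hx2 ⟨hxB', fun hxf => hfB (hxf ▸ hxB)⟩⟩, hxe⟩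
            · rintro ⟨⟨hxB, hxB'⟩, hxe⟩
              exact ⟨hxB, hxe, fun hx => hxB' hx.1⟩
          rw [hset, Set.ncard_diff_singleton_of_mem (show e ∈ B \ B' from ⟨heB, heB'⟩), hcard]
        have hIH := IH (n - 1) (by omega) B'' hb2 hcard2
        -- relate sums over B' and B''
        have hsplit : (∑ᶠ e ∈ B'', ψ e) = ψ e + ((∑ᶠ x ∈ B', ψ x) - ψ f) := by
          rw [hB'', finsum_mem_insert ψ (fun hx => heB' hx.1) (hB'fin.diff),
            hsum B' f hB'fin hfB']
          abel
        rw [hsplit, hψfe] at hIH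
        rw [← hIH]
        abel
  intro B₁ B₂ hB₁ hB₂
  rw [main _ B₁ hB₁ rfl, main _ B₂ hB₂ rfl]
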